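/- Let 0 < a < 6 and K = (x_1^9, x_2^5, x_3^7, x_1^6 x_2^2, x_1^a x_2^2 x_3) in k[x_1,x_2,x_3]. Then K is a table ideal if and only if a = 4, in which case K = K(T) for the (2,3)-table T (in variables ordered x_2, x_1, x_3) with rows (5, 9, 7), (3, 3, 0), (0, 2, 6). -/

import Mathlib

open MvPolynomial Finset

/-- An `(s,n)`-table: an `(s+1) × n` matrix of non-negative integers `α i j`
(rows `0..s`, columns `1..n`, with `d j := α 0 j`) satisfying the table axioms. -/
def IsTable (s n : ℕ) (α : ℕ → ℕ → ℕ) : Prop :=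
  s < n ∧
  (∀ i j, 1 ≤ i → i ≤ s → j < i → α i j = 0) ∧
  (∀ j, 1 ≤ j → j ≤ n → ∑ i ∈ Finset.Icc 1 s, α i j ≤ α 0 j) ∧
  (∀ k, 1 ≤ k → k ≤ s →
    α 0 k = ∑ i ∈ Finset.Icc 1 (k - 1), α i k + ∑ j ∈ Finset.Icc (k + 1) n, α k j
      + (if k + 1 ≤ s then α (k + 1) (k + 1) else 0))

/-- The generator `m_{i,j}` of `K(T)`, with columns `t` mapped to the variable `v t`:
`m_{i,j} = x_1^{d_1-α_{1,1}} ⋯ x_i^{d_i-α_{1,i}-⋯-α_{i,i}} · x_j^{d_j-α_{1,j}-⋯-α_{i,j}}`. -/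
noncomputable def mGenV (𝕜 : Type*) [Field 𝕜] (v : ℕ → ℕ) (α : ℕ → ℕ → ℕ) (i j : ℕ) :
    MvPolynomial ℕ 𝕜 :=
  (∏ t ∈ Finset.Icc 1 i, X (v t) ^ (α 0 t - ∑ r ∈ Finset.Icc 1 i, α r t)) *
    X (v j) ^ (α 0 j - ∑ r ∈ Finset.Icc 1 i, α r j)

/-- The generator `m_{i,j}` with the default variable order. -/
noncomputable def mGen (𝕜 : Type*) [Field 𝕜] (α : ℕ → ℕ → ℕ) (i j : ℕ) :
    MvPolynomial ℕ 𝕜 :=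
  mGenV 𝕜 id α i j

/-- The ideal `K(T)` associated to an `(s,n)`-table, generated by all `m_{i,j}`,
`0 ≤ i ≤ s`, `i < j ≤ n`, in `𝕜[x_1,…,x_n]` (viewed inside `MvPolynomial ℕ 𝕜`). -/
noncomputable def KIdeal (𝕜 : Type*) [Field 𝕜] (s n : ℕ) (α : ℕ → ℕ → ℕ) :
    Ideal (MvPolynomial ℕ 𝕜) :=
  Ideal.span {m | ∃ i j, i ≤ s ∧ i < j ∧ j ≤ n ∧ m = mGen 𝕜 α i j}

/-- A table is in normal form: nonzero diagonal entries, no unconstrained almost-zero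
columns, and strict column inequalities. -/
def NormalForm (s n : ℕ) (α : ℕ → ℕ → ℕ) : Prop :=
  (∀ i, 1 ≤ i → i ≤ s → α i i ≠ 0) ∧
  (1 ≤ s → ∀ j, s + 1 ≤ j → j ≤ n → ∃ i, 1 ≤ i ∧ i ≤ s ∧ α i j ≠ 0) ∧
  (∀ j, 1 ≤ j → j ≤ n → ∑ i ∈ Finset.Icc 1 s, α i j < α 0 j)

/-- A generalised table: a disjoint union of tables on disjoint sets of variables. -/
structure GenTable where
  num : ℕ
  s : Fin num → ℕ
  n : Fin num → ℕ
  α : Fin num → ℕ → ℕ → ℕ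
  var : Fin num → ℕ → ℕ
  var_inj : ∀ c c' j j', 1 ≤ j → j ≤ n c → 1 ≤ j' → j' ≤ n c' →
    var c j = var c' j' → c = c' ∧ j = j'
  table : ∀ c, IsTable (s c) (n c) (α c)

/-- The ideal associated to a generalised table: the sum of the ideals of the
individual tables. -/
noncomputable def gKIdeal (𝕜 : Type*) [Field 𝕜] (T : GenTable) :
    Ideal (MvPolynomial ℕ 𝕜) :=
  Ideal.span {m | ∃ c i j, i ≤ T.s c ∧ i < j ∧ j ≤ T.n c ∧
    m = mGenV 𝕜 (T.var c) (T.α c) i j}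

/-- A generalised table is in normal form iff each individual table is. -/
def gNormal (T : GenTable) : Prop := ∀ c, NormalForm (T.s c) (T.n c) (T.α c)

/-- The `(2,3)`-table with rows `(5, 9, 7)`, `(3, 3, 0)`, `(0, 2, 6)`. -/
def tau15 : ℕ → ℕ → ℕ
  | 0, 1 => 5 | 0, 2 => 9 | 0, 3 => 7
  | 1, 1 => 3 | 1, 2 => 3
  | 2, 2 => 2 | 2, 3 => 6
  | _, _ => 0

/-- Variable order `x_2, x_1, x_3`: column 1 ↦ variable 2, column 2 ↦ 1, column 3 ↦ 3. -/
def v15 : ℕ → ℕ := fun t => if t = 1 then 2 else if t = 2 then 1 else 3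

section Aux
noncomputable def expV (v : ℕ → ℕ) (α : ℕ → ℕ → ℕ) (i j : ℕ) : ℕ →₀ ℕ :=
  (∑ t ∈ Finset.Icc 1 i, Finsupp.single (v t) (α 0 t - ∑ r ∈ Finset.Icc 1 i, α r t))
    + Finsupp.single (v j) (α 0 j - ∑ r ∈ Finset.Icc 1 i, α r j)

lemma prod_monomial_one {𝕜 : Type*} [Field 𝕜] (s : Finset ℕ) (f : ℕ → (ℕ →₀ ℕ)) :
    (∏ t ∈ s, (monomial (f t) (1 : 𝕜))) = monomial (∑ t ∈ s, f t) 1 := by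
  classical
  induction s using Finset.induction with
  | empty => simp
  | insert _ _ h ih => simp [Finset.prod_insert h, Finset.sum_insert h, ih, monomial_mul]

lemma mGenV_eq {𝕜 : Type*} [Field 𝕜] (v : ℕ → ℕ) (α : ℕ → ℕ → ℕ) (i j : ℕ) :
    mGenV 𝕜 v α i j = monomial (expV v α i j) 1 := by
  simp only [mGenV, X_pow_eq_monomial, prod_monomial_one, monomial_mul, one_mul, expV]

lemma monomial_mem_span_image {𝕜 : Type*} [Field 𝕜] (u : ℕ →₀ ℕ) (S : Set (ℕ →₀ ℕ)) :
    (monomial u (1 : 𝕜)) ∈ Ideal.span ((fun e => monomial e (1 : 𝕜)) '' S) ↔ ∃ g ∈ S, g ≤ u := by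
  rw [mem_ideal_span_monomial_image]
  simp [support_monomial]
end Aux
section Aux2
/-- Exponent of column `t` at level `i`. -/
def colExp (α : ℕ → ℕ → ℕ) (i t : ℕ) : ℕ := α 0 t - ∑ r ∈ Finset.Icc 1 i, α r t

lemma expV_def' (v : ℕ → ℕ) (α : ℕ → ℕ → ℕ) (i j : ℕ) :
    expV v α i j = (∑ t ∈ Finset.Icc 1 i, Finsupp.single (v t) (colExp α i t))
      + Finsupp.single (v j) (colExp α i j) := rfl

lemma expV_apply (v : ℕ → ℕ) (α : ℕ → ℕ → ℕ) (i j x : ℕ) :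
    expV v α i j x = (∑ t ∈ Finset.Icc 1 i, if v t = x then colExp α i t else 0)
      + (if v j = x then colExp α i j else 0) := by
  classical
  rw [expV_def', Finsupp.add_apply, Finsupp.finset_sum_apply]
  simp [Finsupp.single_apply]

lemma expV_ne_zero {v : ℕ → ℕ} {α : ℕ → ℕ → ℕ} {i j x : ℕ} (hj : 1 ≤ j)
    (h : expV v α i j x ≠ 0) : ∃ t, 1 ≤ t ∧ (t ≤ i ∨ t = j) ∧ v t = x := by
  classical
  rw [expV_apply] at h
  by_contra hc
  push_neg at hc
  apply h
  rw [Finset.sum_eq_zero, if_neg, add_zero]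
  · exact fun hvj => (hc j hj (Or.inr rfl)) hvj
  · intro t ht
    rw [Finset.mem_Icc] at ht
    rw [if_neg]
    exact fun h2 => (hc t ht.1 (Or.inl ht.2)) h2
end Aux2
section Aux3
lemma Icc10 : Finset.Icc 1 0 = (∅ : Finset ℕ) := by decide
lemma Icc11 : Finset.Icc 1 1 = ({1} : Finset ℕ) := by decide
lemma Icc12 : Finset.Icc 1 2 = ({1, 2} : Finset ℕ) := by decide
lemma Icc13 : Finset.Icc 1 3 = ({1, 2, 3} : Finset ℕ) := by decide
lemma Icc23 : Finset.Icc 2 3 = ({2, 3} : Finset ℕ) := by decide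
lemma Icc33 : Finset.Icc 3 3 = ({3} : Finset ℕ) := by decide

lemma expV0 (v : ℕ → ℕ) (α : ℕ → ℕ → ℕ) (j : ℕ) :
    expV v α 0 j = Finsupp.single (v j) (α 0 j) := by
  rw [expV_def']
  simp [Icc10, colExp]

lemma expV1_apply (v : ℕ → ℕ) (α : ℕ → ℕ → ℕ) (j x : ℕ) :
    expV v α 1 j x = (if v 1 = x then α 0 1 - α 1 1 else 0)
      + (if v j = x then α 0 j - α 1 j else 0) := by
  rw [expV_apply]
  simp [Icc11, colExp]

lemma expV2_apply (v : ℕ → ℕ) (α : ℕ → ℕ → ℕ) (j x : ℕ) :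
    expV v α 2 j x = (if v 1 = x then α 0 1 - (α 1 1 + α 2 1) else 0)
      + (if v 2 = x then α 0 2 - (α 1 2 + α 2 2) else 0)
      + (if v j = x then α 0 j - (α 1 j + α 2 j) else 0) := by
  rw [expV_apply]
  rw [Icc12, Finset.sum_pair (by norm_num : (1:ℕ) ≠ 2)]
  simp only [colExp, Icc12, Finset.sum_pair (by norm_num : (1:ℕ) ≠ 2), add_assoc]
end Aux3
section Fwd

noncomputable def g1f : ℕ →₀ ℕ := Finsupp.single 1 9
noncomputable def g2f : ℕ →₀ ℕ := Finsupp.single 2 5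
noncomputable def g3f : ℕ →₀ ℕ := Finsupp.single 3 7
noncomputable def g4f : ℕ →₀ ℕ := Finsupp.single 1 6 + Finsupp.single 2 2
noncomputable def g5f (a : ℕ) : ℕ →₀ ℕ :=
  Finsupp.single 1 a + Finsupp.single 2 2 + Finsupp.single 3 1

noncomputable def Gset (a : ℕ) : Set (ℕ →₀ ℕ) := {g1f, g2f, g3f, g4f, g5f a}

lemma fle {f g : ℕ →₀ ℕ} (h : f ≤ g) (x : ℕ) : f x ≤ g x := Finsupp.le_def.mp h x

set_option maxHeartbeats 2000000 in
lemma fwd_main (a : ℕ) (ha1 : 0 < a) (ha2 : a < 6) (T : GenTable)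
    (key1 : ∀ c i j, i ≤ T.s c → i < j → j ≤ T.n c →
      ∃ g ∈ Gset a, g ≤ expV (T.var c) (T.α c) i j)
    (key2 : ∀ g ∈ Gset a, ∃ c i j, i ≤ T.s c ∧ i < j ∧ j ≤ T.n c ∧
      expV (T.var c) (T.α c) i j ≤ g) :
    a = 4 := by
  classical
  -- Step 1: locate g5f as a table generator
  obtain ⟨c, i5, j5, hi5, hij5, hj5, hle5⟩ := key2 (g5f a) (by simp [Gset])
  have hexp5 : expV (T.var c) (T.α c) i5 j5 = g5f a := by
    obtain ⟨g, hg, hgle⟩ := key1 c i5 j5 hi5 hij5 hj5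
    have hglee : g ≤ g5f a := hgle.trans hle5
    simp only [Gset, Set.mem_insert_iff, Set.mem_singleton_iff] at hg
    rcases hg with rfl|rfl|rfl|rfl|rfl
    · exfalso
      have h1' := fle hglee 1
      simp [g1f, g5f, Finsupp.single_apply] at h1'
      omega
    · exfalso
      have h2' := fle hglee 2
      simp [g2f, g5f, Finsupp.single_apply] at h2'
    · exfalso
      have h3' := fle hglee 3
      simp [g3f, g5f, Finsupp.single_apply] at h3'
    · exfalso
      have h1' := fle hglee 1
      simp [g4f, g5f, Finsupp.single_apply] at h1'
      omega
    · exact le_antisymm hle5 hgle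
  obtain ⟨hsn, hzero, hcolsum, hax⟩ := T.table c
  have vinj : ∀ t t', 1 ≤ t → t ≤ T.n c → 1 ≤ t' → t' ≤ T.n c →
      T.var c t = T.var c t' → t = t' :=
    fun t t' h1 h2 h3 h4 h5 => (T.var_inj c c t t' h1 h2 h3 h4 h5).2
  -- all column variables are among 1,2,3
  have hv : ∀ j, 1 ≤ j → j ≤ T.n c → T.var c j = 1 ∨ T.var c j = 2 ∨ T.var c j = 3 := by
    intro j h1 h2
    obtain ⟨g, hg, hgle⟩ := key1 c 0 j (Nat.zero_le _) h1 h2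
    rw [expV0] at hgle
    simp only [Gset, Set.mem_insert_iff, Set.mem_singleton_iff] at hg
    rcases hg with rfl|rfl|rfl|rfl|rfl
    · have h1' := fle hgle 1
      simp [g1f, Finsupp.single_apply] at h1'
      split_ifs at h1' <;> omega
    · have h2' := fle hgle 2
      simp [g2f, Finsupp.single_apply] at h2'
      split_ifs at h2' <;> omega
    · have h3' := fle hgle 3
      simp [g3f, Finsupp.single_apply] at h3'
      split_ifs at h3' <;> omega
    · have h1' := fle hgle 1
      have h2' := fle hgle 2
      simp [g4f, Finsupp.single_apply] at h1' h2'
      split_ifs at h1' h2' <;> omega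
    · have h1' := fle hgle 1
      have h2' := fle hgle 2
      simp [g5f, Finsupp.single_apply] at h1' h2'
      split_ifs at h1' h2' <;> omega
  -- n ≤ 3
  have hn3 : T.n c ≤ 3 := by
    by_contra hcon
    push_neg at hcon
    have hv1 := hv 1 (by omega) (by omega)
    have hv2 := hv 2 (by omega) (by omega)
    have hv3 := hv 3 (by omega) (by omega)
    have hv4 := hv 4 (by omega) (by omega)
    have ne12 : T.var c 1 ≠ T.var c 2 := fun h => by
      have := vinj 1 2 (by omega) (by omega) (by omega) (by omega) h; omega
    have ne13 : T.var c 1 ≠ T.var c 3 := fun h => by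
      have := vinj 1 3 (by omega) (by omega) (by omega) (by omega) h; omega
    have ne14 : T.var c 1 ≠ T.var c 4 := fun h => by
      have := vinj 1 4 (by omega) (by omega) (by omega) (by omega) h; omega
    have ne23 : T.var c 2 ≠ T.var c 3 := fun h => by
      have := vinj 2 3 (by omega) (by omega) (by omega) (by omega) h; omega
    have ne24 : T.var c 2 ≠ T.var c 4 := fun h => by
      have := vinj 2 4 (by omega) (by omega) (by omega) (by omega) h; omega
    have ne34 : T.var c 3 ≠ T.var c 4 := fun h => by
      have := vinj 3 4 (by omega) (by omega) (by omega) (by omega) h; omega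
    omega
  -- columns realising variables 1, 2, 3
  have hco1 : expV (T.var c) (T.α c) i5 j5 1 = a := by
    rw [hexp5]; simp [g5f, Finsupp.single_apply]
  have hco2 : expV (T.var c) (T.α c) i5 j5 2 = 2 := by
    rw [hexp5]; simp [g5f, Finsupp.single_apply]
  have hco3 : expV (T.var c) (T.α c) i5 j5 3 = 1 := by
    rw [hexp5]; simp [g5f, Finsupp.single_apply]
  obtain ⟨t1, ht1a, ht1b, ht1v⟩ := expV_ne_zero (v := T.var c) (α := T.α c)
    (by omega : 1 ≤ j5) (by rw [hco1]; omega)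
  obtain ⟨t2, ht2a, ht2b, ht2v⟩ := expV_ne_zero (v := T.var c) (α := T.α c)
    (by omega : 1 ≤ j5) (by rw [hco2]; omega)
  obtain ⟨t3, ht3a, ht3b, ht3v⟩ := expV_ne_zero (v := T.var c) (α := T.α c)
    (by omega : 1 ≤ j5) (by rw [hco3]; omega)
  have net12 : t1 ≠ t2 := fun h => by rw [h, ht2v] at ht1v; omega
  have net13 : t1 ≠ t3 := fun h => by rw [h, ht3v] at ht1v; omega
  have net23 : t2 ≠ t3 := fun h => by rw [h, ht3v] at ht2v; omega
  have hi5' : i5 = 2 := by omega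
  have hj5' : j5 = 3 := by omega
  have hs2 : T.s c = 2 := by omega
  have hn3' : T.n c = 3 := by omega
  subst hi5' hj5'
  -- distinctness of column variables
  have ne12 : T.var c 1 ≠ T.var c 2 := fun h => by
    have := vinj 1 2 (by omega) (by omega) (by omega) (by omega) h; omega
  have ne13 : T.var c 1 ≠ T.var c 3 := fun h => by
    have := vinj 1 3 (by omega) (by omega) (by omega) (by omega) h; omega
  have ne23 : T.var c 2 ≠ T.var c 3 := fun h => by
    have := vinj 2 3 (by omega) (by omega) (by omega) (by omega) h; omega
  -- coordinates of the g5 generator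
  have hc1 : T.α c 0 1 - (T.α c 1 1 + T.α c 2 1) = g5f a (T.var c 1) := by
    have h := congrArg (fun f => f (T.var c 1)) hexp5
    simp only [expV2_apply] at h
    rw [if_neg (Ne.symm ne12), if_neg (Ne.symm ne13)] at h
    simpa using h
  have hc2 : T.α c 0 2 - (T.α c 1 2 + T.α c 2 2) = g5f a (T.var c 2) := by
    have h := congrArg (fun f => f (T.var c 2)) hexp5
    simp only [expV2_apply] at h
    rw [if_neg ne12, if_neg (Ne.symm ne23)] at h
    simpa using h
  have hc3 : T.α c 0 3 - (T.α c 1 3 + T.α c 2 3) = g5f a (T.var c 3) := by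
    have h := congrArg (fun f => f (T.var c 3)) hexp5
    simp only [expV2_apply] at h
    rw [if_neg ne13, if_neg ne23] at h
    simpa using h
  have hA21 : T.α c 2 1 = 0 := hzero 2 1 (by omega) (by omega) (by omega)
  -- the generator g4
  obtain ⟨c4, i4, j4, hi4, hij4, hj4, hle4⟩ := key2 g4f (by simp [Gset])
  have hexp4 : expV (T.var c4) (T.α c4) i4 j4 = g4f := by
    obtain ⟨g, hg, hgle⟩ := key1 c4 i4 j4 hi4 hij4 hj4
    have hglee : g ≤ g4f := hgle.trans hle4
    simp only [Gset, Set.mem_insert_iff, Set.mem_singleton_iff] at hg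
    rcases hg with rfl|rfl|rfl|rfl|rfl
    · exfalso; have := fle hglee 1; simp [g1f, g4f, Finsupp.single_apply] at this
    · exfalso; have := fle hglee 2; simp [g2f, g4f, Finsupp.single_apply] at this
    · exfalso; have := fle hglee 3; simp [g3f, g4f, Finsupp.single_apply] at this
    · exact le_antisymm hle4 hgle
    · exfalso; have := fle hglee 3; simp [g5f, g4f, Finsupp.single_apply] at this
  have hc4 : c4 = c := by
    have h1 : expV (T.var c4) (T.α c4) i4 j4 1 ≠ 0 := by
      rw [hexp4]; simp [g4f, Finsupp.single_apply]
    obtain ⟨t', ht'a, ht'b, ht'v⟩ := expV_ne_zero (by omega : 1 ≤ j4) h1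
    have hsc4 := (T.table c4).1
    exact (T.var_inj c4 c t' t1 ht'a (by omega) ht1a (by omega)
      (by rw [ht'v, ht1v])).1
  rw [hc4] at hexp4 hi4 hj4
  have hi4' : i4 = 0 ∨ i4 = 1 ∨ i4 = 2 := by omega
  rcases hi4' with rfl|rfl|rfl
  · -- i4 = 0 impossible
    rw [expV0] at hexp4
    have h1 := congrArg (fun f => f 1) hexp4
    have h2 := congrArg (fun f => f 2) hexp4
    have hg1 : g4f 1 = 6 := by simp [g4f, Finsupp.single_apply]
    have hg2 : g4f 2 = 2 := by simp [g4f, Finsupp.single_apply]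
    simp only [Finsupp.single_apply] at h1 h2
    rw [hg1] at h1
    rw [hg2] at h2
    split_ifs at h1 h2 <;> omega
  swap
  · -- i4 = 2 impossible
    have hj43 : j4 = 3 := by omega
    subst hj43
    have hcmb := hexp5.symm.trans hexp4
    have h3 := congrArg (fun f => f 3) hcmb
    simp [g5f, g4f, Finsupp.single_apply] at h3
  -- i4 = 1
  have hnej4 : T.var c j4 ≠ T.var c 1 := fun h => by
    have := vinj j4 1 (by omega) (by omega) (by omega) (by omega) h; omega
  have hw : T.α c 0 1 - T.α c 1 1 = g4f (T.var c 1) := by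
    have h := congrArg (fun f => f (T.var c 1)) hexp4
    simp only [expV1_apply] at h
    rw [if_neg hnej4] at h
    simpa using h
  -- v 1 = 2
  have hvar1 : T.var c 1 = 2 := by
    rcases hv 1 (by omega) (by omega) with h|h|h
    · rw [h] at hw hc1
      simp [g4f, g5f, Finsupp.single_apply] at hw hc1
      omega
    · exact h
    · rw [h] at hw hc1
      simp [g4f, g5f, Finsupp.single_apply] at hw hc1
      omega
  have hw2 : T.α c 0 1 - T.α c 1 1 = 2 := by
    rw [hvar1] at hw; simpa [g4f, Finsupp.single_apply] using hw
  -- pure generator x1^9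
  have hP1 : ∃ j, 1 ≤ j ∧ j ≤ 3 ∧ T.var c j = 1 ∧ T.α c 0 j = 9 := by
    obtain ⟨cp, ip, jp, hip, hijp, hjp, hlep⟩ := key2 g1f (by simp [Gset])
    have hexpp : expV (T.var cp) (T.α cp) ip jp = g1f := by
      obtain ⟨g, hg, hgle⟩ := key1 cp ip jp hip hijp hjp
      have hglee : g ≤ g1f := hgle.trans hlep
      simp only [Gset, Set.mem_insert_iff, Set.mem_singleton_iff] at hg
      rcases hg with rfl|rfl|rfl|rfl|rfl
      · exact le_antisymm hlep hgle
      · exfalso; have := fle hglee 2; simp [g2f, g1f, Finsupp.single_apply] at this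
      · exfalso; have := fle hglee 3; simp [g3f, g1f, Finsupp.single_apply] at this
      · exfalso; have := fle hglee 2; simp [g4f, g1f, Finsupp.single_apply] at this
      · exfalso; have := fle hglee 2; simp [g5f, g1f, Finsupp.single_apply] at this
    have hcp : cp = c := by
      have h1 : expV (T.var cp) (T.α cp) ip jp 1 ≠ 0 := by
        rw [hexpp]; simp [g1f, Finsupp.single_apply]
      obtain ⟨t', ht'a, ht'b, ht'v⟩ := expV_ne_zero (by omega : 1 ≤ jp) h1
      have hscp := (T.table cp).1
      exact (T.var_inj cp c t' t1 ht'a (by omega) ht1a (by omega)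
        (by rw [ht'v, ht1v])).1
    rw [hcp] at hexpp hip hjp
    have hip' : ip = 0 ∨ ip = 1 ∨ ip = 2 := by omega
    rcases hip' with rfl|rfl|rfl
    · rw [expV0] at hexpp
      have h1 := congrArg (fun f => f 1) hexpp
      have hg1 : g1f 1 = 9 := by simp [g1f, Finsupp.single_apply]
      simp only [Finsupp.single_apply] at h1
      rw [hg1] at h1
      by_cases hcnd : T.var c jp = 1
      · rw [if_pos hcnd] at h1
        exact ⟨jp, by omega, by omega, hcnd, h1⟩
      · rw [if_neg hcnd] at h1; omega
    · exfalso
      have hnejp : T.var c jp ≠ T.var c 1 := fun h => by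
        have := vinj jp 1 (by omega) (by omega) (by omega) (by omega) h; omega
      have h := congrArg (fun f => f (T.var c 1)) hexpp
      simp only [expV1_apply] at h
      rw [if_neg hnejp] at h
      simp only [if_true, add_zero] at h
      rw [hvar1] at h
      simp [g1f, Finsupp.single_apply] at h
      omega
    · exfalso
      have hjp3 : jp = 3 := by omega
      subst hjp3
      have hcmb := hexp5.symm.trans hexpp
      have h2 := congrArg (fun f => f 2) hcmb
      simp [g5f, g1f, Finsupp.single_apply] at h2
  -- pure generator x2^5
  have hP2 : T.α c 0 1 = 5 := by
    obtain ⟨cp, ip, jp, hip, hijp, hjp, hlep⟩ := key2 g2f (by simp [Gset])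
    have hexpp : expV (T.var cp) (T.α cp) ip jp = g2f := by
      obtain ⟨g, hg, hgle⟩ := key1 cp ip jp hip hijp hjp
      have hglee : g ≤ g2f := hgle.trans hlep
      simp only [Gset, Set.mem_insert_iff, Set.mem_singleton_iff] at hg
      rcases hg with rfl|rfl|rfl|rfl|rfl
      · exfalso; have := fle hglee 1; simp [g1f, g2f, Finsupp.single_apply] at this
      · exact le_antisymm hlep hgle
      · exfalso; have := fle hglee 3; simp [g3f, g2f, Finsupp.single_apply] at this
      · exfalso; have := fle hglee 1; simp [g4f, g2f, Finsupp.single_apply] at this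
      · exfalso; have := fle hglee 1; simp [g5f, g2f, Finsupp.single_apply] at this; omega
    have hcp : cp = c := by
      have h1 : expV (T.var cp) (T.α cp) ip jp 2 ≠ 0 := by
        rw [hexpp]; simp [g2f, Finsupp.single_apply]
      obtain ⟨t', ht'a, ht'b, ht'v⟩ := expV_ne_zero (by omega : 1 ≤ jp) h1
      have hscp := (T.table cp).1
      exact (T.var_inj cp c t' t2 ht'a (by omega) ht2a (by omega)
        (by rw [ht'v, ht2v])).1
    rw [hcp] at hexpp hip hjp
    have hip' : ip = 0 ∨ ip = 1 ∨ ip = 2 := by omega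
    rcases hip' with rfl|rfl|rfl
    · rw [expV0] at hexpp
      have h1 := congrArg (fun f => f 2) hexpp
      have hg1 : g2f 2 = 5 := by simp [g2f, Finsupp.single_apply]
      simp only [Finsupp.single_apply] at h1
      rw [hg1] at h1
      by_cases hcnd : T.var c jp = 2
      · have hjp1 : jp = 1 := vinj jp 1 (by omega) (by omega) (by omega) (by omega)
          (by rw [hcnd, hvar1])
        rw [if_pos hcnd] at h1
        rw [hjp1] at h1
        exact h1
      · rw [if_neg hcnd] at h1; omega
    · exfalso
      have hnejp : T.var c jp ≠ T.var c 1 := fun h => by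
        have := vinj jp 1 (by omega) (by omega) (by omega) (by omega) h; omega
      have h := congrArg (fun f => f (T.var c 1)) hexpp
      simp only [expV1_apply] at h
      rw [if_neg hnejp] at h
      simp only [if_true, add_zero] at h
      rw [hvar1] at h
      simp [g2f, Finsupp.single_apply] at h
      omega
    · exfalso
      have hjp3 : jp = 3 := by omega
      subst hjp3
      have hcmb := hexp5.symm.trans hexpp
      have h1 := congrArg (fun f => f 1) hcmb
      simp [g5f, g2f, Finsupp.single_apply] at h1
      omega
  -- pure generator x3^7
  have hP3 : ∃ j, 1 ≤ j ∧ j ≤ 3 ∧ T.var c j = 3 ∧ T.α c 0 j = 7 := by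
    obtain ⟨cp, ip, jp, hip, hijp, hjp, hlep⟩ := key2 g3f (by simp [Gset])
    have hexpp : expV (T.var cp) (T.α cp) ip jp = g3f := by
      obtain ⟨g, hg, hgle⟩ := key1 cp ip jp hip hijp hjp
      have hglee : g ≤ g3f := hgle.trans hlep
      simp only [Gset, Set.mem_insert_iff, Set.mem_singleton_iff] at hg
      rcases hg with rfl|rfl|rfl|rfl|rfl
      · exfalso; have := fle hglee 1; simp [g1f, g3f, Finsupp.single_apply] at this
      · exfalso; have := fle hglee 2; simp [g2f, g3f, Finsupp.single_apply] at this
      · exact le_antisymm hlep hgle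
      · exfalso; have := fle hglee 1; simp [g4f, g3f, Finsupp.single_apply] at this
      · exfalso; have := fle hglee 2; simp [g5f, g3f, Finsupp.single_apply] at this
    have hcp : cp = c := by
      have h1 : expV (T.var cp) (T.α cp) ip jp 3 ≠ 0 := by
        rw [hexpp]; simp [g3f, Finsupp.single_apply]
      obtain ⟨t', ht'a, ht'b, ht'v⟩ := expV_ne_zero (by omega : 1 ≤ jp) h1
      have hscp := (T.table cp).1
      exact (T.var_inj cp c t' t3 ht'a (by omega) ht3a (by omega)
        (by rw [ht'v, ht3v])).1
    rw [hcp] at hexpp hip hjp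
    have hip' : ip = 0 ∨ ip = 1 ∨ ip = 2 := by omega
    rcases hip' with rfl|rfl|rfl
    · rw [expV0] at hexpp
      have h1 := congrArg (fun f => f 3) hexpp
      have hg1 : g3f 3 = 7 := by simp [g3f, Finsupp.single_apply]
      simp only [Finsupp.single_apply] at h1
      rw [hg1] at h1
      by_cases hcnd : T.var c jp = 3
      · rw [if_pos hcnd] at h1
        exact ⟨jp, by omega, by omega, hcnd, h1⟩
      · rw [if_neg hcnd] at h1; omega
    · exfalso
      have hnejp : T.var c jp ≠ T.var c 1 := fun h => by
        have := vinj jp 1 (by omega) (by omega) (by omega) (by omega) h; omega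
      have h := congrArg (fun f => f (T.var c 1)) hexpp
      simp only [expV1_apply] at h
      rw [if_neg hnejp] at h
      simp only [if_true, add_zero] at h
      rw [hvar1] at h
      simp [g3f, Finsupp.single_apply] at h
      omega
    · exfalso
      have hjp3 : jp = 3 := by omega
      subst hjp3
      have hcmb := hexp5.symm.trans hexpp
      have h2 := congrArg (fun f => f 2) hcmb
      simp [g5f, g3f, Finsupp.single_apply] at h2
  -- the table axioms for k = 1, 2
  have hax1 : T.α c 0 1 = T.α c 1 2 + T.α c 1 3 + T.α c 2 2 := by
    have h := hax 1 (by omega) (by omega)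
    rw [hn3'] at h
    rw [hs2] at h
    simpa [Icc10, Icc23, Finset.sum_pair (by norm_num : (2:ℕ) ≠ 3)] using h
  have hax2 : T.α c 0 2 = T.α c 1 2 + T.α c 2 3 := by
    have h := hax 2 (by omega) (by omega)
    rw [hn3'] at h
    rw [hs2] at h
    simpa [Icc11, Icc33] using h
  -- final case split on j4
  have hj4' : j4 = 2 ∨ j4 = 3 := by omega
  rcases hj4' with rfl|rfl
  · -- j4 = 2
    have hwj : T.α c 0 2 - T.α c 1 2 = g4f (T.var c 2) := by
      have h := congrArg (fun f => f (T.var c 2)) hexp4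
      simp only [expV1_apply] at h
      rw [if_neg ne12] at h
      simpa using h
    have hvar2 : T.var c 2 = 1 := by
      rcases hv 2 (by omega) (by omega) with h|h|h
      · exact h
      · rw [hvar1] at ne12; omega
      · exfalso
        have h1 := congrArg (fun f => f 1) hexp4
        simp only [expV1_apply] at h1
        rw [if_neg (by rw [hvar1]; omega), if_neg (by rw [h]; omega)] at h1
        simp [g4f, Finsupp.single_apply] at h1
    have hw6 : T.α c 0 2 - T.α c 1 2 = 6 := by
      rw [hvar2] at hwj
      simpa [g4f, Finsupp.single_apply] using hwj
    have hvar3 : T.var c 3 = 3 := by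
      rcases hv 3 (by omega) (by omega) with h|h|h
      · rw [hvar2] at ne23; omega
      · rw [hvar1] at ne13; omega
      · exact h
    obtain ⟨j9, hj9a, hj9b, hj9v, hj9d⟩ := hP1
    have hj92 : j9 = 2 := vinj j9 2 (by omega) (by omega) (by omega) (by omega)
      (by rw [hj9v, hvar2])
    rw [hj92] at hj9d
    obtain ⟨j7, hj7a, hj7b, hj7v, hj7d⟩ := hP3
    have hj73 : j7 = 3 := vinj j7 3 (by omega) (by omega) (by omega) (by omega)
      (by rw [hj7v, hvar3])
    rw [hj73] at hj7d
    rw [hvar2] at hc2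
    rw [hvar3] at hc3
    simp only [g5f, Finsupp.add_apply, Finsupp.single_apply] at hc2 hc3
    norm_num at hc2 hc3
    omega
  · -- j4 = 3
    have hwj : T.α c 0 3 - T.α c 1 3 = g4f (T.var c 3) := by
      have h := congrArg (fun f => f (T.var c 3)) hexp4
      simp only [expV1_apply] at h
      rw [if_neg ne13] at h
      simpa using h
    have hvar3 : T.var c 3 = 1 := by
      rcases hv 3 (by omega) (by omega) with h|h|h
      · exact h
      · rw [hvar1] at ne13; omega
      · exfalso
        have h1 := congrArg (fun f => f 1) hexp4
        simp only [expV1_apply] at h1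
        rw [if_neg (by rw [hvar1]; omega), if_neg (by rw [h]; omega)] at h1
        simp [g4f, Finsupp.single_apply] at h1
    have hw6 : T.α c 0 3 - T.α c 1 3 = 6 := by
      rw [hvar3] at hwj
      simpa [g4f, Finsupp.single_apply] using hwj
    have hvar2 : T.var c 2 = 3 := by
      rcases hv 2 (by omega) (by omega) with h|h|h
      · rw [hvar3] at ne23; omega
      · rw [hvar1] at ne12; omega
      · exact h
    obtain ⟨j9, hj9a, hj9b, hj9v, hj9d⟩ := hP1
    have hj93 : j9 = 3 := vinj j9 3 (by omega) (by omega) (by omega) (by omega)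
      (by rw [hj9v, hvar3])
    rw [hj93] at hj9d
    obtain ⟨j7, hj7a, hj7b, hj7v, hj7d⟩ := hP3
    have hj72 : j7 = 2 := vinj j7 2 (by omega) (by omega) (by omega) (by omega)
      (by rw [hj7v, hvar2])
    rw [hj72] at hj7d
    rw [hvar2] at hc2
    rw [hvar3] at hc3
    simp only [g5f, Finsupp.add_apply, Finsupp.single_apply] at hc2 hc3
    norm_num at hc2 hc3
    omega
end Fwd
section Rev

/-- The exponent set of the table `tau15`/`v15`. -/
def E15 : Set (ℕ →₀ ℕ) :=
  {u | ∃ i j, i ≤ 2 ∧ i < j ∧ j ≤ 3 ∧ u = expV v15 tau15 i j}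

lemma isTable_tau15 : IsTable 2 3 tau15 := by
  refine ⟨by norm_num, ?_, ?_, ?_⟩
  · intro i j h1 h2 h3
    interval_cases i <;> interval_cases j <;> rfl
  · intro j h1 h2
    interval_cases j <;> decide
  · intro k h1 h2
    interval_cases k <;> decide

lemma Kset_eq (𝕜 : Type*) [Field 𝕜] (a : ℕ) :
    ({X 1 ^ 9, X 2 ^ 5, X 3 ^ 7, X 1 ^ 6 * X 2 ^ 2,
      X 1 ^ a * X 2 ^ 2 * X 3} : Set (MvPolynomial ℕ 𝕜))
    = (fun e => monomial e (1 : 𝕜)) '' Gset a := by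
  have h3 : (X 3 : MvPolynomial ℕ 𝕜) = monomial (Finsupp.single 3 1) 1 := by
    rw [← pow_one (X 3 : MvPolynomial ℕ 𝕜), X_pow_eq_monomial]
  simp only [Gset, Set.image_insert_eq, Set.image_singleton, g1f, g2f, g3f, g4f, g5f]
  simp only [X_pow_eq_monomial]
  rw [h3]
  simp only [monomial_mul, one_mul, mul_one]

lemma gKIdeal_eq_image (𝕜 : Type*) [Field 𝕜] (T : GenTable) :
    gKIdeal 𝕜 T = Ideal.span ((fun e => monomial e (1 : 𝕜)) ''
      {u | ∃ c i j, i ≤ T.s c ∧ i < j ∧ j ≤ T.n c ∧ u = expV (T.var c) (T.α c) i j}) := by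
  unfold gKIdeal
  congr 1
  ext m
  constructor
  · rintro ⟨c, i, j, h1, h2, h3, rfl⟩
    exact ⟨expV (T.var c) (T.α c) i j, ⟨c, i, j, h1, h2, h3, rfl⟩, (mGenV_eq _ _ _ _).symm⟩
  · rintro ⟨u, ⟨c, i, j, h1, h2, h3, rfl⟩, rfl⟩
    exact ⟨c, i, j, h1, h2, h3, (mGenV_eq _ _ _ _).symm⟩

lemma genset_eq (𝕜 : Type*) [Field 𝕜] :
    {m | ∃ i j, i ≤ 2 ∧ i < j ∧ j ≤ 3 ∧ m = mGenV 𝕜 v15 tau15 i j}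
    = (fun e => monomial e (1 : 𝕜)) '' E15 := by
  ext m
  constructor
  · rintro ⟨i, j, h1, h2, h3, rfl⟩
    exact ⟨expV v15 tau15 i j, ⟨i, j, h1, h2, h3, rfl⟩, (mGenV_eq _ _ _ _).symm⟩
  · rintro ⟨u, ⟨i, j, h1, h2, h3, rfl⟩, rfl⟩
    exact ⟨i, j, h1, h2, h3, (mGenV_eq _ _ _ _).symm⟩

lemma le_E01 : g2f ≤ expV v15 tau15 0 1 := by
  rw [Finsupp.le_def]; intro x
  rw [expV0]
  simp [g2f, v15, tau15, Finsupp.single_apply]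

lemma ge_E01 : expV v15 tau15 0 1 ≤ g2f := by
  rw [Finsupp.le_def]; intro x
  rw [expV0]
  simp [g2f, v15, tau15, Finsupp.single_apply]

lemma le_E02 : g1f ≤ expV v15 tau15 0 2 := by
  rw [Finsupp.le_def]; intro x
  rw [expV0]
  simp [g1f, v15, tau15, Finsupp.single_apply]

lemma ge_E02 : expV v15 tau15 0 2 ≤ g1f := by
  rw [Finsupp.le_def]; intro x
  rw [expV0]
  simp [g1f, v15, tau15, Finsupp.single_apply]

lemma le_E03 : g3f ≤ expV v15 tau15 0 3 := by
  rw [Finsupp.le_def]; intro x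
  rw [expV0]
  simp [g3f, v15, tau15, Finsupp.single_apply]

lemma ge_E03 : expV v15 tau15 0 3 ≤ g3f := by
  rw [Finsupp.le_def]; intro x
  rw [expV0]
  simp [g3f, v15, tau15, Finsupp.single_apply]

lemma le_E12 : g4f ≤ expV v15 tau15 1 2 := by
  rw [Finsupp.le_def]; intro x
  rw [expV1_apply]
  simp only [g4f, Finsupp.add_apply, Finsupp.single_apply, v15, tau15]
  norm_num
  all_goals try split_ifs
  all_goals omega

lemma ge_E12 : expV v15 tau15 1 2 ≤ g4f := by
  rw [Finsupp.le_def]; intro x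
  rw [expV1_apply]
  simp only [g4f, Finsupp.add_apply, Finsupp.single_apply, v15, tau15]
  norm_num
  all_goals try split_ifs
  all_goals omega

lemma le_E13 : g3f ≤ expV v15 tau15 1 3 := by
  rw [Finsupp.le_def]; intro x
  rw [expV1_apply]
  simp only [g3f, Finsupp.add_apply, Finsupp.single_apply, v15, tau15]
  norm_num
  all_goals try split_ifs
  all_goals omega

lemma le_E23 : g5f 4 ≤ expV v15 tau15 2 3 := by
  rw [Finsupp.le_def]; intro x
  rw [expV2_apply]
  simp only [g5f, Finsupp.add_apply, Finsupp.single_apply, v15, tau15]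
  norm_num
  all_goals try split_ifs
  all_goals omega

lemma ge_E23 : expV v15 tau15 2 3 ≤ g5f 4 := by
  rw [Finsupp.le_def]; intro x
  rw [expV2_apply]
  simp only [g5f, Finsupp.add_apply, Finsupp.single_apply, v15, tau15]
  norm_num
  all_goals try split_ifs
  all_goals omega

lemma span_eq_15 (𝕜 : Type*) [Field 𝕜] :
    Ideal.span ((fun e => monomial e (1 : 𝕜)) '' Gset 4)
      = Ideal.span ((fun e => monomial e (1 : 𝕜)) '' E15) := by
  apply le_antisymm
  · rw [Ideal.span_le]
    rintro m ⟨u, hu, rfl⟩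
    have : (monomial u (1 : 𝕜)) ∈ Ideal.span ((fun e => monomial e (1 : 𝕜)) '' E15) := by
      rw [monomial_mem_span_image]
      simp only [Gset, Set.mem_insert_iff, Set.mem_singleton_iff] at hu
      rcases hu with rfl|rfl|rfl|rfl|rfl
      · exact ⟨expV v15 tau15 0 2, ⟨0, 2, by omega, by omega, by omega, rfl⟩, ge_E02⟩
      · exact ⟨expV v15 tau15 0 1, ⟨0, 1, by omega, by omega, by omega, rfl⟩, ge_E01⟩
      · exact ⟨expV v15 tau15 0 3, ⟨0, 3, by omega, by omega, by omega, rfl⟩, ge_E03⟩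
      · exact ⟨expV v15 tau15 1 2, ⟨1, 2, by omega, by omega, by omega, rfl⟩, ge_E12⟩
      · exact ⟨expV v15 tau15 2 3, ⟨2, 3, by omega, by omega, by omega, rfl⟩, ge_E23⟩
    exact this
  · rw [Ideal.span_le]
    rintro m ⟨u, ⟨i, j, h1, h2, h3, rfl⟩, rfl⟩
    have : (monomial (expV v15 tau15 i j) (1 : 𝕜)) ∈
        Ideal.span ((fun e => monomial e (1 : 𝕜)) '' Gset 4) := by
      rw [monomial_mem_span_image]
      have hcase : (i = 0 ∧ j = 1) ∨ (i = 0 ∧ j = 2) ∨ (i = 0 ∧ j = 3) ∨ (i = 1 ∧ j = 2)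
          ∨ (i = 1 ∧ j = 3) ∨ (i = 2 ∧ j = 3) := by omega
      rcases hcase with ⟨rfl, rfl⟩|⟨rfl, rfl⟩|⟨rfl, rfl⟩|⟨rfl, rfl⟩|⟨rfl, rfl⟩|⟨rfl, rfl⟩
      · exact ⟨g2f, by simp [Gset], le_E01⟩
      · exact ⟨g1f, by simp [Gset], le_E02⟩
      · exact ⟨g3f, by simp [Gset], le_E03⟩
      · exact ⟨g4f, by simp [Gset], le_E12⟩
      · exact ⟨g3f, by simp [Gset], le_E13⟩
      · exact ⟨g5f 4, by simp [Gset], le_E23⟩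
    exact this

/-- The one-component generalised table for `tau15`. -/
noncomputable def T15 : GenTable where
  num := 1
  s := fun _ => 2
  n := fun _ => 3
  α := fun _ => tau15
  var := fun _ => v15
  var_inj := by
    intro c c' j j' h1 h2 h3 h4 h5
    refine ⟨Subsingleton.elim c c', ?_⟩
    interval_cases j <;> interval_cases j' <;> simp_all [v15]
  table := fun _ => isTable_tau15

lemma T15_ideal (𝕜 : Type*) [Field 𝕜] :
    gKIdeal 𝕜 T15 = Ideal.span ((fun e => monomial e (1 : 𝕜)) '' E15) := by
  rw [gKIdeal_eq_image]
  congr 1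
  ext u
  constructor
  · rintro ⟨u', ⟨c, i, j, h1, h2, h3, rfl⟩, rfl⟩
    exact ⟨expV v15 tau15 i j, ⟨i, j, h1, h2, h3, rfl⟩, rfl⟩
  · rintro ⟨u', ⟨i, j, h1, h2, h3, rfl⟩, rfl⟩
    exact ⟨expV v15 tau15 i j, ⟨(0 : Fin 1), i, j, h1, h2, h3, rfl⟩, rfl⟩

end Rev
/-- for `0 < a < 6`, the ideal
`K = (x_1^9, x_2^5, x_3^7, x_1^6 x_2^2, x_1^a x_2^2 x_3)` is a table ideal iff
`a = 4`, in which case `K = K(T)` for the `(2,3)`-table `tau15` in the variable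
order `x_2, x_1, x_3`. -/
theorem stmt15 (𝕜 : Type*) [Field 𝕜] (a : ℕ) (ha1 : 0 < a) (ha2 : a < 6) :
    ((∃ T : GenTable, gKIdeal 𝕜 T =
        Ideal.span ({X 1 ^ 9, X 2 ^ 5, X 3 ^ 7, X 1 ^ 6 * X 2 ^ 2,
          X 1 ^ a * X 2 ^ 2 * X 3} : Set (MvPolynomial ℕ 𝕜))) ↔ a = 4) ∧
    (a = 4 → IsTable 2 3 tau15 ∧
      Ideal.span ({X 1 ^ 9, X 2 ^ 5, X 3 ^ 7, X 1 ^ 6 * X 2 ^ 2,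
          X 1 ^ a * X 2 ^ 2 * X 3} : Set (MvPolynomial ℕ 𝕜)) =
        Ideal.span {m | ∃ i j, i ≤ 2 ∧ i < j ∧ j ≤ 3 ∧ m = mGenV 𝕜 v15 tau15 i j}) := by
  constructor
  · constructor
    · rintro ⟨T, hT⟩
      refine fwd_main a ha1 ha2 T ?_ ?_
      · intro c i j h1 h2 h3
        have hmem : mGenV 𝕜 (T.var c) (T.α c) i j ∈ gKIdeal 𝕜 T :=
          Ideal.subset_span ⟨c, i, j, h1, h2, h3, rfl⟩
        rw [hT, Kset_eq 𝕜 a, mGenV_eq, monomial_mem_span_image] at hmem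
        exact hmem
      · intro g hg
        have hmem : monomial g (1 : 𝕜) ∈ gKIdeal 𝕜 T := by
          rw [hT, Kset_eq 𝕜 a]
          exact Ideal.subset_span ⟨g, hg, rfl⟩
        rw [gKIdeal_eq_image, monomial_mem_span_image] at hmem
        obtain ⟨u, ⟨c, i, j, h1, h2, h3, rfl⟩, hle⟩ := hmem
        exact ⟨c, i, j, h1, h2, h3, hle⟩
    · rintro rfl
      refine ⟨T15, ?_⟩
      rw [T15_ideal, Kset_eq 𝕜 4]
      exact (span_eq_15 𝕜).symm
  · rintro rfl
    refine ⟨isTable_tau15, ?_⟩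
    rw [Kset_eq 𝕜 4, genset_eq, span_eq_15]
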